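/- For every k ∈ (0, 1/2) and every y ∈ [0, 1], the Bernoulli reparameterized data-fit φ_{k,y} is differentiable on all of ℝ and there exists a constant L ≥ 0 such that the derivative of φ_{k,y} is Lipschitz continuous on ℝ with constant L. -/

import Mathlib

open Set Filter

private lemma hasDeriv_f1 (k y : ℝ) (hk0 : 0 < k) (h1k : 0 < 1 - k) (θ : ℝ) :
    HasDerivAt (fun θ : ℝ => Real.log (1 + (k / (1 - k)) * Real.exp ((θ - k) / (k * (1 - k))))
          - y * ((θ - k) / (k * (1 - k)) + Real.log (k / (1 - k))))
      ((k / (1 - k)) * Real.exp ((θ - k) / (k * (1 - k)))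
        / (1 + (k / (1 - k)) * Real.exp ((θ - k) / (k * (1 - k)))) / (k * (1 - k))
        - y / (k * (1 - k))) θ := by
  have h1 : HasDerivAt (fun θ : ℝ => (θ - k) / (k * (1 - k))) (1 / (k * (1 - k))) θ :=
    ((hasDerivAt_id θ).sub_const k).div_const (k * (1 - k))
  have h2 := h1.exp
  have h3 := (h2.const_mul (k / (1 - k))).const_add 1
  have hpos : 0 < 1 + (k / (1 - k)) * Real.exp ((θ - k) / (k * (1 - k))) := by positivity
  have h4 := h3.log (ne_of_gt hpos)
  have h5 := (h1.add_const (Real.log (k / (1 - k)))).const_mul y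
  have h6 := h4.sub h5
  refine h6.congr_deriv ?_
  ring

private lemma hasDeriv_f3 (k y : ℝ) (hk0 : 0 < k) (h1k : 0 < 1 - k) (θ : ℝ) :
    HasDerivAt (fun θ : ℝ => Real.log (1 + ((1 - k) / k) * Real.exp ((θ + k - 1) / (k * (1 - k))))
          - y * ((θ + k - 1) / (k * (1 - k)) + Real.log ((1 - k) / k)))
      (((1 - k) / k) * Real.exp ((θ + k - 1) / (k * (1 - k)))
        / (1 + ((1 - k) / k) * Real.exp ((θ + k - 1) / (k * (1 - k)))) / (k * (1 - k))
        - y / (k * (1 - k))) θ := by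
  have h1 : HasDerivAt (fun θ : ℝ => (θ + k - 1) / (k * (1 - k))) (1 / (k * (1 - k))) θ :=
    (((hasDerivAt_id θ).add_const k).sub_const 1).div_const (k * (1 - k))
  have h2 := h1.exp
  have h3 := (h2.const_mul ((1 - k) / k)).const_add 1
  have hpos : 0 < 1 + ((1 - k) / k) * Real.exp ((θ + k - 1) / (k * (1 - k))) := by positivity
  have h4 := h3.log (ne_of_gt hpos)
  have h5 := (h1.add_const (Real.log ((1 - k) / k))).const_mul y
  have h6 := h4.sub h5
  refine h6.congr_deriv ?_
  ring

private lemma hasDeriv_f2 (y θ : ℝ) (h0 : 0 < θ) (h1 : θ < 1) :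
    HasDerivAt (fun θ : ℝ => -Real.log (1 - θ) - y * Real.log (θ / (1 - θ)))
      ((θ - y) / (θ * (1 - θ))) θ := by
  have h1θ : (0:ℝ) < 1 - θ := by linarith
  have key : HasDerivAt (fun θ : ℝ => -Real.log (1 - θ) - y * (Real.log θ - Real.log (1 - θ)))
      ((θ - y) / (θ * (1 - θ))) θ := by
    have hd1 : HasDerivAt (fun θ : ℝ => 1 - θ) (-1) θ := (hasDerivAt_id θ).const_sub 1
    have hl1 := hd1.log (ne_of_gt h1θ)
    have hlθ := Real.hasDerivAt_log (ne_of_gt h0)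
    have h := hl1.neg.sub ((hlθ.sub hl1).const_mul y)
    refine h.congr_deriv ?_
    field_simp
    ring
  refine key.congr_of_eventuallyEq ?_
  filter_upwards [isOpen_Ioo.mem_nhds (show θ ∈ Set.Ioo (0:ℝ) 1 from ⟨h0, h1⟩)] with x hx
  rw [Real.log_div (ne_of_gt hx.1) (ne_of_gt (by linarith [hx.2] : (0:ℝ) < 1 - x))]

private lemma hasDeriv_D1 (k y : ℝ) (hk0 : 0 < k) (h1k : 0 < 1 - k) (θ : ℝ) :
    HasDerivAt (fun θ : ℝ => (k / (1 - k)) * Real.exp ((θ - k) / (k * (1 - k)))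
        / (1 + (k / (1 - k)) * Real.exp ((θ - k) / (k * (1 - k)))) / (k * (1 - k))
        - y / (k * (1 - k)))
      ((k / (1 - k)) * Real.exp ((θ - k) / (k * (1 - k)))
        / ((1 + (k / (1 - k)) * Real.exp ((θ - k) / (k * (1 - k)))) ^ 2 * (k * (1 - k)) ^ 2)) θ := by
  have h1 : HasDerivAt (fun θ : ℝ => (θ - k) / (k * (1 - k))) (1 / (k * (1 - k))) θ :=
    ((hasDerivAt_id θ).sub_const k).div_const (k * (1 - k))
  have h2 := h1.exp.const_mul (k / (1 - k))
  have hden := h2.const_add 1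
  have hpos : 0 < 1 + (k / (1 - k)) * Real.exp ((θ - k) / (k * (1 - k))) := by positivity
  have h := ((h2.div hden (ne_of_gt hpos)).div_const (k * (1 - k))).sub_const (y / (k * (1 - k)))
  refine h.congr_deriv ?_
  field_simp
  ring

private lemma hasDeriv_D3 (k y : ℝ) (hk0 : 0 < k) (h1k : 0 < 1 - k) (θ : ℝ) :
    HasDerivAt (fun θ : ℝ => ((1 - k) / k) * Real.exp ((θ + k - 1) / (k * (1 - k)))
        / (1 + ((1 - k) / k) * Real.exp ((θ + k - 1) / (k * (1 - k)))) / (k * (1 - k))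
        - y / (k * (1 - k)))
      (((1 - k) / k) * Real.exp ((θ + k - 1) / (k * (1 - k)))
        / ((1 + ((1 - k) / k) * Real.exp ((θ + k - 1) / (k * (1 - k)))) ^ 2 * (k * (1 - k)) ^ 2)) θ := by
  have h1 : HasDerivAt (fun θ : ℝ => (θ + k - 1) / (k * (1 - k))) (1 / (k * (1 - k))) θ :=
    (((hasDerivAt_id θ).add_const k).sub_const 1).div_const (k * (1 - k))
  have h2 := h1.exp.const_mul ((1 - k) / k)
  have hden := h2.const_add 1
  have hpos : 0 < 1 + ((1 - k) / k) * Real.exp ((θ + k - 1) / (k * (1 - k))) := by positivity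
  have h := ((h2.div hden (ne_of_gt hpos)).div_const (k * (1 - k))).sub_const (y / (k * (1 - k)))
  refine h.congr_deriv ?_
  field_simp
  ring

private lemma hasDeriv_D2 (y θ : ℝ) (h0 : 0 < θ) (h1 : θ < 1) :
    HasDerivAt (fun θ : ℝ => (θ - y) / (θ * (1 - θ)))
      ((θ * (1 - θ) - (θ - y) * (1 - 2 * θ)) / (θ * (1 - θ)) ^ 2) θ := by
  have h1θ : (0:ℝ) < 1 - θ := by linarith
  have hnum : HasDerivAt (fun θ : ℝ => θ - y) 1 θ := (hasDerivAt_id θ).sub_const y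
  have hden : HasDerivAt (fun θ : ℝ => θ * (1 - θ)) (1 - 2 * θ) θ := by
    have := (hasDerivAt_id θ).mul ((hasDerivAt_id θ).const_sub 1)
    simp only [id_eq] at this
    refine this.congr_deriv ?_
    ring
  have h := hnum.div hden (ne_of_gt (by positivity))
  refine h.congr_deriv ?_
  ring

noncomputable def bernF (k y : ℝ) : ℝ → ℝ := fun θ : ℝ =>
  if θ ≤ k then
    Real.log (1 + (k / (1 - k)) * Real.exp ((θ - k) / (k * (1 - k))))
      - y * ((θ - k) / (k * (1 - k)) + Real.log (k / (1 - k)))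
  else if θ ≤ 1 - k then
    -Real.log (1 - θ) - y * Real.log (θ / (1 - θ))
  else
    Real.log (1 + ((1 - k) / k) * Real.exp ((θ + k - 1) / (k * (1 - k))))
      - y * ((θ + k - 1) / (k * (1 - k)) + Real.log ((1 - k) / k))

noncomputable def bernD1 (k y : ℝ) : ℝ → ℝ := fun θ : ℝ =>
  (k / (1 - k)) * Real.exp ((θ - k) / (k * (1 - k)))
    / (1 + (k / (1 - k)) * Real.exp ((θ - k) / (k * (1 - k)))) / (k * (1 - k))
    - y / (k * (1 - k))

noncomputable def bernD2 (y : ℝ) : ℝ → ℝ := fun θ : ℝ => (θ - y) / (θ * (1 - θ))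

noncomputable def bernD3 (k y : ℝ) : ℝ → ℝ := fun θ : ℝ =>
  ((1 - k) / k) * Real.exp ((θ + k - 1) / (k * (1 - k)))
    / (1 + ((1 - k) / k) * Real.exp ((θ + k - 1) / (k * (1 - k)))) / (k * (1 - k))
    - y / (k * (1 - k))

noncomputable def bernD (k y : ℝ) : ℝ → ℝ := fun θ : ℝ =>
  if θ ≤ k then bernD1 k y θ else if θ ≤ 1 - k then bernD2 y θ else bernD3 k y θ

private lemma idF1 (k y : ℝ) (hk0 : 0 < k) (h1k : 0 < 1 - k) :
    Real.log (1 + (k / (1 - k)) * Real.exp ((k - k) / (k * (1 - k))))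
      - y * ((k - k) / (k * (1 - k)) + Real.log (k / (1 - k)))
    = -Real.log (1 - k) - y * Real.log (k / (1 - k)) := by
  have h : 1 + k / (1 - k) = (1 - k)⁻¹ := by field_simp; ring
  simp only [sub_self, zero_div, Real.exp_zero, mul_one, zero_add, h, Real.log_inv]

private lemma idF2 (k y : ℝ) (hk0 : 0 < k) (h1k : 0 < 1 - k) :
    -Real.log (1 - (1 - k)) - y * Real.log ((1 - k) / (1 - (1 - k)))
    = Real.log (1 + ((1 - k) / k) * Real.exp ((1 - k + k - 1) / (k * (1 - k))))
      - y * ((1 - k + k - 1) / (k * (1 - k)) + Real.log ((1 - k) / k)) := by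
  have h : 1 + (1 - k) / k = k⁻¹ := by field_simp; ring
  have h2 : (1:ℝ) - k + k - 1 = 0 := by ring
  have h3 : (1:ℝ) - (1 - k) = k := by ring
  simp only [h2, h3, zero_div, Real.exp_zero, mul_one, zero_add, h, Real.log_inv]

private lemma idD1 (k y : ℝ) (hk0 : 0 < k) (h1k : 0 < 1 - k) :
    bernD1 k y k = bernD2 y k := by
  have hne : (1:ℝ) - k ≠ 0 := ne_of_gt h1k
  simp only [bernD1, bernD2, sub_self, zero_div, Real.exp_zero, mul_one]
  have h : 1 + k / (1 - k) = (1 - k)⁻¹ := by field_simp; ring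
  rw [h, div_inv_eq_mul, div_mul_cancel₀ _ hne, div_sub_div_same]

private lemma idD2 (k y : ℝ) (hk0 : 0 < k) (h1k : 0 < 1 - k) :
    bernD2 y (1 - k) = bernD3 k y (1 - k) := by
  have hne : k ≠ 0 := ne_of_gt hk0
  have h2 : (1:ℝ) - k + k - 1 = 0 := by ring
  have h3 : (1:ℝ) - (1 - k) = k := by ring
  simp only [bernD2, bernD3, h2, h3, zero_div, Real.exp_zero, mul_one]
  have h : 1 + (1 - k) / k = k⁻¹ := by field_simp; ring
  rw [h, div_inv_eq_mul, div_mul_cancel₀ _ hne, div_sub_div_same, mul_comm (1-k) k]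

private lemma hasDeriv_all (k y : ℝ) (hk0 : 0 < k) (hk1 : k < 1/2) (θ : ℝ) :
    HasDerivAt (bernF k y) (bernD k y θ) θ := by
  have h1k : (0:ℝ) < 1 - k := by linarith
  have hkk : k < 1 - k := by linarith
  have hF1 : ∀ x : ℝ, x ≤ k → bernF k y x =
      Real.log (1 + (k / (1 - k)) * Real.exp ((x - k) / (k * (1 - k))))
        - y * ((x - k) / (k * (1 - k)) + Real.log (k / (1 - k))) := by
    intro x hx; simp only [bernF]; rw [if_pos hx]
  have hF2 : ∀ x : ℝ, k < x → x ≤ 1 - k → bernF k y x =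
      -Real.log (1 - x) - y * Real.log (x / (1 - x)) := by
    intro x hx hx'; simp only [bernF]; rw [if_neg (not_le.2 hx), if_pos hx']
  have hF3 : ∀ x : ℝ, 1 - k < x → bernF k y x =
      Real.log (1 + ((1 - k) / k) * Real.exp ((x + k - 1) / (k * (1 - k))))
        - y * ((x + k - 1) / (k * (1 - k)) + Real.log ((1 - k) / k)) := by
    intro x hx; simp only [bernF]
    rw [if_neg (not_le.2 (lt_trans hkk hx)), if_neg (not_le.2 hx)]
  rcases lt_trichotomy θ k with hθ | heq | hθ
  · -- θ < k
    have hD : bernD k y θ = bernD1 k y θ := by simp only [bernD]; rw [if_pos hθ.le]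
    rw [hD]
    refine HasDerivAt.congr_of_eventuallyEq (f := fun x =>
      Real.log (1 + (k / (1 - k)) * Real.exp ((x - k) / (k * (1 - k))))
        - y * ((x - k) / (k * (1 - k)) + Real.log (k / (1 - k)))) ?_ ?_
    · exact hasDeriv_f1 k y hk0 h1k θ
    · filter_upwards [isOpen_Iio.mem_nhds (show θ ∈ Iio k from hθ)] with x hx
      exact hF1 x hx.le
  · -- θ = k
    rw [heq]
    have hD : bernD k y k = bernD1 k y k := by simp only [bernD]; rw [if_pos le_rfl]
    rw [hD]
    have hL : HasDerivWithinAt (bernF k y) (bernD1 k y k) (Iic k) k := by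
      refine ((hasDeriv_f1 k y hk0 h1k k).hasDerivWithinAt).congr ?_ ?_
      · intro x hx; exact hF1 x hx
      · exact hF1 k le_rfl
    have hR : HasDerivWithinAt (bernF k y) (bernD1 k y k) (Ioc k (1 - k)) k := by
      rw [idD1 k y hk0 h1k]
      refine ((hasDeriv_f2 y k hk0 (by linarith)).hasDerivWithinAt).congr ?_ ?_
      · intro x hx; exact hF2 x hx.1 hx.2
      · rw [hF1 k le_rfl]; exact idF1 k y hk0 h1k
    have := (hL.union hR).hasDerivAt (by
      rw [Iic_union_Ioc_eq_Iic hkk.le]; exact Iic_mem_nhds hkk)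
    exact this
  · rcases lt_trichotomy θ (1 - k) with hθ' | heq' | hθ'
    · -- k < θ < 1 - k
      have hD : bernD k y θ = bernD2 y θ := by
        simp only [bernD]; rw [if_neg (not_le.2 hθ), if_pos hθ'.le]
      rw [hD]
      refine HasDerivAt.congr_of_eventuallyEq (f := fun x =>
        -Real.log (1 - x) - y * Real.log (x / (1 - x))) ?_ ?_
      · exact hasDeriv_f2 y θ (lt_trans hk0 hθ) (by linarith)
      · filter_upwards [isOpen_Ioo.mem_nhds (show θ ∈ Ioo k (1 - k) from ⟨hθ, hθ'⟩)] with x hx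
        exact hF2 x hx.1 hx.2.le
    · -- θ = 1 - k
      rw [heq']
      have hD : bernD k y (1 - k) = bernD2 y (1 - k) := by
        simp only [bernD]; rw [if_neg (not_le.2 hkk), if_pos le_rfl]
      rw [hD]
      have hL : HasDerivWithinAt (bernF k y) (bernD2 y (1 - k)) (Ioc k (1 - k)) (1 - k) := by
        refine ((hasDeriv_f2 y (1 - k) (by linarith) (by linarith)).hasDerivWithinAt).congr ?_ ?_
        · intro x hx; exact hF2 x hx.1 hx.2
        · exact hF2 (1 - k) hkk le_rfl
      have hR : HasDerivWithinAt (bernF k y) (bernD2 y (1 - k)) (Ioi (1 - k)) (1 - k) := by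
        rw [idD2 k y hk0 h1k]
        refine ((hasDeriv_f3 k y hk0 h1k (1 - k)).hasDerivWithinAt).congr ?_ ?_
        · intro x hx; exact hF3 x hx
        · rw [hF2 (1 - k) hkk le_rfl]; exact idF2 k y hk0 h1k
      have := (hL.union hR).hasDerivAt (by
        rw [Ioc_union_Ioi_eq_Ioi hkk.le]; exact Ioi_mem_nhds hkk)
      exact this
    · -- θ > 1 - k
      have hD : bernD k y θ = bernD3 k y θ := by
        simp only [bernD]
        rw [if_neg (not_le.2 (lt_trans hkk hθ')), if_neg (not_le.2 hθ')]
      rw [hD]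
      refine HasDerivAt.congr_of_eventuallyEq (f := fun x =>
        Real.log (1 + ((1 - k) / k) * Real.exp ((x + k - 1) / (k * (1 - k))))
          - y * ((x + k - 1) / (k * (1 - k)) + Real.log ((1 - k) / k))) ?_ ?_
      · exact hasDeriv_f3 k y hk0 h1k θ
      · filter_upwards [isOpen_Ioi.mem_nhds (show θ ∈ Ioi (1 - k) from hθ')] with x hx
        exact hF3 x hx

private lemma aux_bound (t c : ℝ) (ht : 0 < t) (hc : 0 < c) :
    t / ((1 + t) ^ 2 * c ^ 2) ≤ 2 / c ^ 2 := by
  rw [div_le_div_iff₀ (by positivity) (by positivity)]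
  nlinarith [mul_nonneg (mul_nonneg ht.le ht.le) (sq_nonneg c),
    mul_nonneg ht.le (sq_nonneg c), sq_nonneg c]

private lemma lip_D1 (k y : ℝ) (hk0 : 0 < k) (h1k : 0 < 1 - k) (a b : ℝ) :
    |bernD1 k y a - bernD1 k y b| ≤ 2 / (k * (1 - k)) ^ 2 * |a - b| := by
  have hc : (0:ℝ) < k * (1 - k) := mul_pos hk0 h1k
  have := Convex.norm_image_sub_le_of_norm_hasDerivWithin_le
    (f := bernD1 k y)
    (f' := fun θ => (k / (1 - k)) * Real.exp ((θ - k) / (k * (1 - k)))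
        / ((1 + (k / (1 - k)) * Real.exp ((θ - k) / (k * (1 - k)))) ^ 2 * (k * (1 - k)) ^ 2))
    (C := 2 / (k * (1 - k)) ^ 2)
    (fun x _ => (hasDeriv_D1 k y hk0 h1k x).hasDerivWithinAt) ?_ convex_univ
    (mem_univ b) (mem_univ a)
  · simpa [Real.norm_eq_abs] using this
  · intro x _
    rw [Real.norm_eq_abs, abs_of_nonneg (by positivity)]
    exact aux_bound _ _ (by positivity) hc

private lemma lip_D3 (k y : ℝ) (hk0 : 0 < k) (h1k : 0 < 1 - k) (a b : ℝ) :
    |bernD3 k y a - bernD3 k y b| ≤ 2 / (k * (1 - k)) ^ 2 * |a - b| := by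
  have hc : (0:ℝ) < k * (1 - k) := mul_pos hk0 h1k
  have := Convex.norm_image_sub_le_of_norm_hasDerivWithin_le
    (f := bernD3 k y)
    (f' := fun θ => ((1 - k) / k) * Real.exp ((θ + k - 1) / (k * (1 - k)))
        / ((1 + ((1 - k) / k) * Real.exp ((θ + k - 1) / (k * (1 - k)))) ^ 2 * (k * (1 - k)) ^ 2))
    (C := 2 / (k * (1 - k)) ^ 2)
    (fun x _ => (hasDeriv_D3 k y hk0 h1k x).hasDerivWithinAt) ?_ convex_univ
    (mem_univ b) (mem_univ a)
  · simpa [Real.norm_eq_abs] using this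
  · intro x _
    rw [Real.norm_eq_abs, abs_of_nonneg (by positivity)]
    exact aux_bound _ _ (by positivity) hc

private lemma lip_D2 (k y : ℝ) (hk0 : 0 < k) (hk1 : k < 1/2) (hy0 : 0 ≤ y) (hy1 : y ≤ 1)
    (a b : ℝ) (ha : a ∈ Icc k (1 - k)) (hb : b ∈ Icc k (1 - k)) :
    |bernD2 y a - bernD2 y b| ≤ 2 / (k * (1 - k)) ^ 2 * |a - b| := by
  have h1k : (0:ℝ) < 1 - k := by linarith
  have hc : (0:ℝ) < k * (1 - k) := mul_pos hk0 h1k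
  have := Convex.norm_image_sub_le_of_norm_hasDerivWithin_le
    (f := bernD2 y)
    (f' := fun θ => (θ * (1 - θ) - (θ - y) * (1 - 2 * θ)) / (θ * (1 - θ)) ^ 2)
    (C := 2 / (k * (1 - k)) ^ 2) (s := Icc k (1 - k))
    (fun x hx => (hasDeriv_D2 y x (lt_of_lt_of_le hk0 hx.1)
      (by linarith [hx.2] : x < 1)).hasDerivWithinAt) ?_ (convex_Icc _ _) hb ha
  · simpa [Real.norm_eq_abs] using this
  · intro x hx
    have hx0 : 0 < x := lt_of_lt_of_le hk0 hx.1
    have h1x : 0 < 1 - x := by linarith [hx.2]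
    have hden : k * (1 - k) ≤ x * (1 - x) := by nlinarith [mul_nonneg (sub_nonneg.2 hx.1) (by linarith [hx.2] : (0:ℝ) ≤ 1 - x - k)]
    have hden2 : (k * (1 - k)) ^ 2 ≤ (x * (1 - x)) ^ 2 := by nlinarith
    have hnum : |x * (1 - x) - (x - y) * (1 - 2 * x)| ≤ 2 := by
      rw [abs_le]
      constructor
      · nlinarith [mul_nonneg hy0 (by linarith : (0:ℝ) ≤ 2 - 2*x), mul_nonneg hx0.le h1x.le]
      · nlinarith [mul_nonneg hy0 hx0.le, mul_nonneg hx0.le h1x.le,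
          mul_nonneg (sub_nonneg.2 hy1) (by linarith : (0:ℝ) ≤ 2 - 2*x)]
    rw [Real.norm_eq_abs, abs_div, abs_of_nonneg (by positivity : (0:ℝ) ≤ (x * (1 - x)) ^ 2)]
    rw [div_le_div_iff₀ (by positivity) (by positivity)]
    nlinarith [abs_nonneg (x * (1 - x) - (x - y) * (1 - 2 * x))]

private lemma lip_D (k y : ℝ) (hk0 : 0 < k) (hk1 : k < 1/2) (hy0 : 0 ≤ y) (hy1 : y ≤ 1)
    (a b : ℝ) :
    |bernD k y a - bernD k y b| ≤ 2 / (k * (1 - k)) ^ 2 * |a - b| := by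
  have h1k : (0:ℝ) < 1 - k := by linarith
  have hkk : k < 1 - k := by linarith
  set L := 2 / (k * (1 - k)) ^ 2 with hLdef
  have hL : 0 ≤ L := by positivity
  have hDe1 : ∀ x : ℝ, x ≤ k → bernD k y x = bernD1 k y x := by
    intro x hx; simp only [bernD]; rw [if_pos hx]
  have hDe2 : ∀ x : ℝ, x ∈ Icc k (1 - k) → bernD k y x = bernD2 y x := by
    intro x hx
    rcases le_or_gt x k with h | h
    · have hxk : x = k := le_antisymm h hx.1
      rw [hDe1 x h, hxk, idD1 k y hk0 h1k]
    · simp only [bernD]; rw [if_neg (not_le.2 h), if_pos hx.2]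
  have hDe3 : ∀ x : ℝ, 1 - k ≤ x → bernD k y x = bernD3 k y x := by
    intro x hx
    rcases le_or_gt x (1 - k) with h | h
    · have hxk : x = 1 - k := le_antisymm h hx
      rw [hDe2 x ⟨by linarith, h⟩, hxk, idD2 k y hk0 h1k]
    · simp only [bernD]
      rw [if_neg (not_le.2 (lt_of_le_of_lt (by linarith) h)), if_neg (not_le.2 h)]
  have r1 : ∀ u v : ℝ, u ≤ k → v ≤ k → |bernD k y u - bernD k y v| ≤ L * |u - v| := by
    intro u v hu hv; rw [hDe1 u hu, hDe1 v hv]; exact lip_D1 k y hk0 h1k u v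
  have r2 : ∀ u v : ℝ, u ∈ Icc k (1 - k) → v ∈ Icc k (1 - k) →
      |bernD k y u - bernD k y v| ≤ L * |u - v| := by
    intro u v hu hv; rw [hDe2 u hu, hDe2 v hv]; exact lip_D2 k y hk0 hk1 hy0 hy1 u v hu hv
  have r3 : ∀ u v : ℝ, 1 - k ≤ u → 1 - k ≤ v → |bernD k y u - bernD k y v| ≤ L * |u - v| := by
    intro u v hu hv; rw [hDe3 u hu, hDe3 v hv]; exact lip_D3 k y hk0 h1k u v
  -- reduce to a ≤ b
  suffices H : ∀ u v : ℝ, u ≤ v → |bernD k y u - bernD k y v| ≤ L * |u - v| by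
    rcases le_total a b with h | h
    · exact H a b h
    · rw [abs_sub_comm, abs_sub_comm a b]; exact H b a h
  intro u v huv
  by_cases hvk : v ≤ k
  · exact r1 u v (le_trans huv hvk) hvk
  · push_neg at hvk
    by_cases hv1 : v ≤ 1 - k
    · by_cases huk : u ≤ k
      · calc |bernD k y u - bernD k y v|
            ≤ |bernD k y u - bernD k y k| + |bernD k y k - bernD k y v| := abs_sub_le _ _ _
          _ ≤ L * |u - k| + L * |k - v| :=
              add_le_add (r1 u k huk le_rfl) (r2 k v ⟨le_rfl, hkk.le⟩ ⟨hvk.le, hv1⟩)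
          _ = L * |u - v| := by
              rw [abs_of_nonpos (by linarith), abs_of_nonpos (by linarith),
                abs_of_nonpos (by linarith)]
              ring
      · push_neg at huk
        exact r2 u v ⟨huk.le, le_trans huv hv1⟩ ⟨hvk.le, hv1⟩
    · push_neg at hv1
      by_cases huk : u ≤ k
      · calc |bernD k y u - bernD k y v|
            ≤ |bernD k y u - bernD k y k| + |bernD k y k - bernD k y v| := abs_sub_le _ _ _
          _ ≤ L * |u - k| + (|bernD k y k - bernD k y (1 - k)|
              + |bernD k y (1 - k) - bernD k y v|) :=
              add_le_add (r1 u k huk le_rfl) (abs_sub_le _ _ _)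
          _ ≤ L * |u - k| + (L * |k - (1 - k)| + L * |1 - k - v|) :=
              add_le_add le_rfl (add_le_add
                (r2 k (1 - k) ⟨le_rfl, hkk.le⟩ ⟨hkk.le, le_rfl⟩)
                (r3 (1 - k) v le_rfl hv1.le))
          _ = L * |u - v| := by
              rw [abs_of_nonpos (by linarith), abs_of_nonpos (by linarith),
                abs_of_nonpos (by linarith), abs_of_nonpos (by linarith)]
              ring
      · push_neg at huk
        by_cases hu1 : u ≤ 1 - k
        · calc |bernD k y u - bernD k y v|
              ≤ |bernD k y u - bernD k y (1 - k)| + |bernD k y (1 - k) - bernD k y v| :=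
                abs_sub_le _ _ _
            _ ≤ L * |u - (1 - k)| + L * |1 - k - v| :=
                add_le_add (r2 u (1 - k) ⟨huk.le, hu1⟩ ⟨hkk.le, le_rfl⟩)
                  (r3 (1 - k) v le_rfl hv1.le)
            _ = L * |u - v| := by
                rw [abs_of_nonpos (by linarith), abs_of_nonpos (by linarith),
                  abs_of_nonpos (by linarith)]
                ring
        · push_neg at hu1
          exact r3 u v hu1.le hv1.le

/-- **Bernoulli reparameterized data-fit is smooth with Lipschitz gradient.**
For every k ∈ (0, 1/2) and every y ∈ [0, 1], the Bernoulli reparameterized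
data-fit φ_{k,y} is differentiable on all of ℝ and its derivative is Lipschitz
continuous on ℝ with some constant L ≥ 0. -/
theorem bernoulli_reparam_datafit_smooth
    (k : ℝ) (hk0 : 0 < k) (hk1 : k < 1/2) (y : ℝ) (hy0 : 0 ≤ y) (hy1 : y ≤ 1) :
    Differentiable ℝ (fun θ : ℝ =>
      if θ ≤ k then
        Real.log (1 + (k / (1 - k)) * Real.exp ((θ - k) / (k * (1 - k))))
          - y * ((θ - k) / (k * (1 - k)) + Real.log (k / (1 - k)))
      else if θ ≤ 1 - k then
        -Real.log (1 - θ) - y * Real.log (θ / (1 - θ))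
      else
        Real.log (1 + ((1 - k) / k) * Real.exp ((θ + k - 1) / (k * (1 - k))))
          - y * ((θ + k - 1) / (k * (1 - k)) + Real.log ((1 - k) / k))) ∧
    ∃ L : ℝ, 0 ≤ L ∧ ∀ a b : ℝ,
      |deriv (fun θ : ℝ =>
        if θ ≤ k then
          Real.log (1 + (k / (1 - k)) * Real.exp ((θ - k) / (k * (1 - k))))
            - y * ((θ - k) / (k * (1 - k)) + Real.log (k / (1 - k)))
        else if θ ≤ 1 - k then
          -Real.log (1 - θ) - y * Real.log (θ / (1 - θ))
        else
          Real.log (1 + ((1 - k) / k) * Real.exp ((θ + k - 1) / (k * (1 - k))))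
            - y * ((θ + k - 1) / (k * (1 - k)) + Real.log ((1 - k) / k))) a
       - deriv (fun θ : ℝ =>
        if θ ≤ k then
          Real.log (1 + (k / (1 - k)) * Real.exp ((θ - k) / (k * (1 - k))))
            - y * ((θ - k) / (k * (1 - k)) + Real.log (k / (1 - k)))
        else if θ ≤ 1 - k then
          -Real.log (1 - θ) - y * Real.log (θ / (1 - θ))
        else
          Real.log (1 + ((1 - k) / k) * Real.exp ((θ + k - 1) / (k * (1 - k))))
            - y * ((θ + k - 1) / (k * (1 - k)) + Real.log ((1 - k) / k))) b|
      ≤ L * |a - b| := by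
  have hF : (fun θ : ℝ =>
      if θ ≤ k then
        Real.log (1 + (k / (1 - k)) * Real.exp ((θ - k) / (k * (1 - k))))
          - y * ((θ - k) / (k * (1 - k)) + Real.log (k / (1 - k)))
      else if θ ≤ 1 - k then
        -Real.log (1 - θ) - y * Real.log (θ / (1 - θ))
      else
        Real.log (1 + ((1 - k) / k) * Real.exp ((θ + k - 1) / (k * (1 - k))))
          - y * ((θ + k - 1) / (k * (1 - k)) + Real.log ((1 - k) / k))) = bernF k y := rfl
  rw [hF]
  refine ⟨fun θ => (hasDeriv_all k y hk0 hk1 θ).differentiableAt, 2 / (k * (1 - k)) ^ 2,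
    by positivity, fun a b => ?_⟩
  have hda : deriv (bernF k y) a = bernD k y a := (hasDeriv_all k y hk0 hk1 a).deriv
  have hdb : deriv (bernF k y) b = bernD k y b := (hasDeriv_all k y hk0 hk1 b).deriv
  rw [hda, hdb]
  exact lip_D k y hk0 hk1 hy0 hy1 a b
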